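/- (Proposition 1) Let q ∈ ℂ with q ≠ 0, let A_q be the algebra of the quantum 4-sphere S⁴_q, and let e ∈ Mat₄(A_q) be the instanton projection. Then the first Chern–Connes class ch₁(e) vanishes in A_q ⊗ Ā_q ⊗ Ā_q if and only if |q| = 1. -/

import Mathlib

set_option maxHeartbeats 2000000


/-- The relations (s4rel) defining the quantum 4-sphere `S⁴_q`:
`z* = z`, `zα = αz`, `zβ = βz`, `βα = conj(q)·αβ`, `β*α = q·αβ*`, `ββ* = β*β`,
`α*α + |q|²·β*β + z² = 1`, `αα* + ββ* + z² = 1`, where `|q|² = q·conj q`. -/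
def S4Rel {A : Type*} [Ring A] [Algebra ℂ A] [StarRing A] [StarModule ℂ A]
    (q : ℂ) (α β z : A) : Prop :=
  star z = z ∧ z * α = α * z ∧ z * β = β * z ∧
    β * α = (starRingEnd ℂ) q • (α * β) ∧
    star β * α = q • (α * star β) ∧
    β * star β = star β * β ∧
    star α * α + (q * (starRingEnd ℂ) q) • (star β * β) + z ^ 2 = 1 ∧
    α * star α + β * star β + z ^ 2 = 1

/-- `A` (with marked elements `α, β, z`) is *the* universal unital complex *-algebra on
generators `α, β, z` subject to the relations (s4rel) with parameter `q`, i.e. the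
algebra `A_q` of the quantum 4-sphere `S⁴_q`: the generators satisfy the relations, and
for any unital complex *-algebra with elements satisfying the relations there is a unique
unital *-algebra homomorphism sending generators to those elements. -/
def IsUniversalS4 (q : ℂ) (A : Type) [Ring A] [Algebra ℂ A] [StarRing A]
    [StarModule ℂ A] (α β z : A) : Prop :=
  S4Rel q α β z ∧
    ∀ (B : Type) [Ring B] [Algebra ℂ B] [StarRing B] [StarModule ℂ B],
      ∀ a b c : B, S4Rel q a b c →
        ∃! φ : A →⋆ₐ[ℂ] B, φ α = a ∧ φ β = b ∧ φ z = c

open scoped TensorProduct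

/-! Auxiliary concrete *-algebra: `ℂ⁴` with the pointwise operations and the
star given by coordinatewise conjugation composed with the swaps `0↔1`, `2↔3`. -/

def QS : Type := Fin 4 → ℂ

instance : CommRing QS := Pi.commRing
instance : Algebra ℂ QS := Pi.algebra _ _

def qsperm : Fin 4 → Fin 4 := ![1, 0, 3, 2]

instance : StarRing QS where
  star x := fun i => (starRingEnd ℂ) ((x : Fin 4 → ℂ) (qsperm i))
  star_involutive := by
    intro x; funext i
    show (starRingEnd ℂ) ((starRingEnd ℂ) ((x : Fin 4 → ℂ) (qsperm (qsperm i)))) = _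
    fin_cases i <;> simp [qsperm]
  star_mul := by
    intro x y; funext i
    show (starRingEnd ℂ) ((x : Fin 4 → ℂ) (qsperm i) * (y : Fin 4 → ℂ) (qsperm i)) = _
    simp [mul_comm]; exact mul_comm _ _
  star_add := by
    intro x y; funext i
    show (starRingEnd ℂ) ((x : Fin 4 → ℂ) (qsperm i) + (y : Fin 4 → ℂ) (qsperm i)) = _
    simp; rfl

instance : StarModule ℂ QS := by
  constructor
  intro c x; funext i
  show (starRingEnd ℂ) (c * (x : Fin 4 → ℂ) (qsperm i)) = _
  simp; rfl

def bB : QS := ![2, 0, 1, 0]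
def zB : QS := ![1, 1, -1, -1]

lemma star_bB : star bB = (![0, 2, 0, 1] : Fin 4 → ℂ) := by
  funext i
  show (starRingEnd ℂ) ((bB : Fin 4 → ℂ) (qsperm i)) = _
  fin_cases i <;> simp [qsperm, bB, map_ofNat]

lemma star_zB : star zB = zB := by
  funext i
  show (starRingEnd ℂ) ((zB : Fin 4 → ℂ) (qsperm i)) = (zB : Fin 4 → ℂ) i
  fin_cases i <;> simp [qsperm, zB]

lemma qs_rel (q : ℂ) : S4Rel q (0 : QS) bB zB := by
  have hbb : star bB * bB = 0 := by
    rw [star_bB]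
    funext i
    show (![0, 2, 0, 1] : Fin 4 → ℂ) i * (bB : Fin 4 → ℂ) i = (0 : Fin 4 → ℂ) i
    fin_cases i <;> norm_num [bB]
  have hz2 : zB ^ 2 = 1 := by
    rw [pow_two]
    funext i
    show (zB : Fin 4 → ℂ) i * (zB : Fin 4 → ℂ) i = (1 : Fin 4 → ℂ) i
    fin_cases i <;> norm_num [zB]
  refine ⟨star_zB, by rw [mul_zero, zero_mul], mul_comm _ _, ?_, ?_, mul_comm _ _, ?_, ?_⟩
  · rw [mul_zero, zero_mul, smul_zero]
  · rw [mul_zero, zero_mul, smul_zero]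
  · rw [star_zero, zero_mul, hbb, smul_zero, hz2, zero_add, zero_add]
  · rw [zero_mul, mul_comm, hbb, hz2, zero_add, zero_add]

/-- Evaluation at coordinate 0. -/
def Fl : QS →ₗ[ℂ] ℂ where
  toFun x := (x : Fin 4 → ℂ) 0
  map_add' x y := rfl
  map_smul' c x := rfl

/-- `x 0 - x 1`. -/
def Gl : QS →ₗ[ℂ] ℂ where
  toFun x := (x : Fin 4 → ℂ) 0 - (x : Fin 4 → ℂ) 1
  map_add' x y := by
    show ((x : Fin 4 → ℂ) 0 + (y : Fin 4 → ℂ) 0) - ((x : Fin 4 → ℂ) 1 + (y : Fin 4 → ℂ) 1) = _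
    ring
  map_smul' c x := by
    show c * (x : Fin 4 → ℂ) 0 - c * (x : Fin 4 → ℂ) 1 = _
    show _ = c * ((x : Fin 4 → ℂ) 0 - (x : Fin 4 → ℂ) 1)
    ring

/-- `x 0 + x 1 - x 2 - x 3`. -/
def Hl : QS →ₗ[ℂ] ℂ where
  toFun x := (x : Fin 4 → ℂ) 0 + (x : Fin 4 → ℂ) 1 - (x : Fin 4 → ℂ) 2 - (x : Fin 4 → ℂ) 3
  map_add' x y := by
    show ((x : Fin 4 → ℂ) 0 + (y : Fin 4 → ℂ) 0) + ((x : Fin 4 → ℂ) 1 + (y : Fin 4 → ℂ) 1)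
        - ((x : Fin 4 → ℂ) 2 + (y : Fin 4 → ℂ) 2) - ((x : Fin 4 → ℂ) 3 + (y : Fin 4 → ℂ) 3) = _
    show _ = ((x : Fin 4 → ℂ) 0 + (x : Fin 4 → ℂ) 1 - (x : Fin 4 → ℂ) 2 - (x : Fin 4 → ℂ) 3)
        + ((y : Fin 4 → ℂ) 0 + (y : Fin 4 → ℂ) 1 - (y : Fin 4 → ℂ) 2 - (y : Fin 4 → ℂ) 3)
    ring
  map_smul' c x := by
    show c * (x : Fin 4 → ℂ) 0 + c * (x : Fin 4 → ℂ) 1 - c * (x : Fin 4 → ℂ) 2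
        - c * (x : Fin 4 → ℂ) 3 = _
    show _ = c * ((x : Fin 4 → ℂ) 0 + (x : Fin 4 → ℂ) 1 - (x : Fin 4 → ℂ) 2 - (x : Fin 4 → ℂ) 3)
    ring

@[simp] lemma Fl_one : Fl 1 = 1 := by show (1 : ℂ) = 1; rfl
@[simp] lemma Fl_z : Fl zB = 1 := by show (![1, 1, -1, -1] : Fin 4 → ℂ) 0 = 1; norm_num
@[simp] lemma Fl_b : Fl bB = 2 := by show (![2, 0, 1, 0] : Fin 4 → ℂ) 0 = 2; norm_num
@[simp] lemma Fl_sb : Fl (star bB) = 0 := by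
  rw [star_bB]; show (![0, 2, 0, 1] : Fin 4 → ℂ) 0 = 0; norm_num
@[simp] lemma Gl_one : Gl 1 = 0 := by show (1 : ℂ) - 1 = 0; ring
@[simp] lemma Gl_z : Gl zB = 0 := by
  show (![1, 1, -1, -1] : Fin 4 → ℂ) 0 - (![1, 1, -1, -1] : Fin 4 → ℂ) 1 = 0; norm_num
@[simp] lemma Gl_b : Gl bB = 2 := by
  show (![2, 0, 1, 0] : Fin 4 → ℂ) 0 - (![2, 0, 1, 0] : Fin 4 → ℂ) 1 = 2; norm_num
@[simp] lemma Gl_sb : Gl (star bB) = -2 := by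
  rw [star_bB]
  show (![0, 2, 0, 1] : Fin 4 → ℂ) 0 - (![0, 2, 0, 1] : Fin 4 → ℂ) 1 = -2; norm_num
@[simp] lemma Hl_one : Hl 1 = 0 := by show (1 : ℂ) + 1 - 1 - 1 = 0; ring
@[simp] lemma Hl_z : Hl zB = 4 := by
  show (![1, 1, -1, -1] : Fin 4 → ℂ) 0 + (![1, 1, -1, -1] : Fin 4 → ℂ) 1
      - (![1, 1, -1, -1] : Fin 4 → ℂ) 2 - (![1, 1, -1, -1] : Fin 4 → ℂ) 3 = 4
  norm_num [Matrix.cons_val_two, Matrix.cons_val_three, Matrix.tail_cons, Matrix.head_cons]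
@[simp] lemma Hl_b : Hl bB = 1 := by
  show (![2, 0, 1, 0] : Fin 4 → ℂ) 0 + (![2, 0, 1, 0] : Fin 4 → ℂ) 1
      - (![2, 0, 1, 0] : Fin 4 → ℂ) 2 - (![2, 0, 1, 0] : Fin 4 → ℂ) 3 = 1
  norm_num [Matrix.cons_val_two, Matrix.cons_val_three, Matrix.tail_cons, Matrix.head_cons]
@[simp] lemma Hl_sb : Hl (star bB) = 1 := by
  rw [star_bB]
  show (![0, 2, 0, 1] : Fin 4 → ℂ) 0 + (![0, 2, 0, 1] : Fin 4 → ℂ) 1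
      - (![0, 2, 0, 1] : Fin 4 → ℂ) 2 - (![0, 2, 0, 1] : Fin 4 → ℂ) 3 = 1
  norm_num [Matrix.cons_val_two, Matrix.cons_val_three, Matrix.tail_cons, Matrix.head_cons]

/-- Proposition 1: For `q ≠ 0` and `A_q` the algebra of the quantum
4-sphere with instanton projection `e`, the first Chern–Connes class
`ch₁(e) = Σ (e-½)_{ij} ⊗ p(e_{jk}) ⊗ p(e_{ki}) ∈ A_q ⊗ Ā_q ⊗ Ā_q` vanishes iff
`|q| = 1`. -/

theorem ch1_vanishes_iff_modulus_one (q : ℂ) (hq : q ≠ 0)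
    (A : Type) [Ring A] [Algebra ℂ A] [StarRing A] [StarModule ℂ A]
    (α β z : A) (h : IsUniversalS4 q A α β z)
    (e : Matrix (Fin 4) (Fin 4) A)
    (he : e = (2⁻¹ : ℂ) •
      !![1 + z, 0, α, β;
         0, 1 + z, -(q • star β), star α;
         star α, -((starRingEnd ℂ) q • β), 1 - z, 0;
         star β, α, 0, 1 - z])
    (p : A →ₗ[ℂ] A ⧸ Submodule.span ℂ ({1} : Set A))
    (hp : p = (Submodule.span ℂ ({1} : Set A)).mkQ) :
    (∑ i : Fin 4, ∑ j : Fin 4, ∑ k : Fin 4,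
        ((e - (2⁻¹ : ℂ) • 1) i j) ⊗ₜ[ℂ] (p (e j k) ⊗ₜ[ℂ] p (e k i))) = 0
      ↔ ‖q‖ = 1 := by
  subst he hp
  constructor
  · intro H0
    -- use the concrete representation on `QS`
    obtain ⟨φ, ⟨hφa, hφb, hφz⟩, -⟩ := h.2 QS 0 bB zB (qs_rel q)
    set N := Submodule.span ℂ ({1} : Set A) with hN
    have hG1 : (Gl.comp φ.toAlgHom.toLinearMap) 1 = 0 := by
      simp [LinearMap.comp_apply, map_one]
    have hH1 : (Hl.comp φ.toAlgHom.toLinearMap) 1 = 0 := by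
      simp [LinearMap.comp_apply, map_one]
    have hGle : N ≤ LinearMap.ker (Gl.comp φ.toAlgHom.toLinearMap) := by
      rw [hN, Submodule.span_le, Set.singleton_subset_iff]
      exact hG1
    have hHle : N ≤ LinearMap.ker (Hl.comp φ.toAlgHom.toLinearMap) := by
      rw [hN, Submodule.span_le, Set.singleton_subset_iff]
      exact hH1
    set G' : (A ⧸ N) →ₗ[ℂ] ℂ := N.liftQ (Gl.comp φ.toAlgHom.toLinearMap) hGle with hG'
    set H' : (A ⧸ N) →ₗ[ℂ] ℂ := N.liftQ (Hl.comp φ.toAlgHom.toLinearMap) hHle with hH'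
    set L : A ⊗[ℂ] ((A ⧸ N) ⊗[ℂ] (A ⧸ N)) →ₗ[ℂ] ℂ :=
      TensorProduct.lift ((LinearMap.mul ℂ ℂ).compl₁₂ (Fl.comp φ.toAlgHom.toLinearMap)
        (TensorProduct.lift ((LinearMap.mul ℂ ℂ).compl₁₂ G' H'))) with hL
    have HL := congrArg L H0
    rw [map_zero] at HL
    simp only [map_sum] at HL
    have key : q * (starRingEnd ℂ) q = 1 := by
      simp (config := { decide := true }) only [hL, hG', hH', Fin.sum_univ_four,
        Matrix.sub_apply, Matrix.smul_apply, Matrix.one_apply,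
        Matrix.cons_val', Matrix.cons_val_zero, Matrix.cons_val_one, Matrix.head_cons,
        Matrix.empty_val', Matrix.cons_val_fin_one, Matrix.head_fin_const,
        Matrix.cons_val_two, Matrix.cons_val_three, Matrix.tail_cons, Matrix.of_apply,
        if_true, if_false, TensorProduct.lift.tmul, LinearMap.compl₁₂_apply,
        LinearMap.mul_apply', LinearMap.comp_apply, Submodule.mkQ_apply,
        Submodule.liftQ_apply, AlgHom.toLinearMap_apply, StarAlgHom.coe_toAlgHom,
        map_smul, map_add, map_sub, map_neg, map_one, map_zero, map_star,
        LinearMap.add_apply, LinearMap.sub_apply, LinearMap.smul_apply,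
        LinearMap.neg_apply, LinearMap.zero_apply,
        Submodule.Quotient.mk_add, Submodule.Quotient.mk_sub, Submodule.Quotient.mk_smul,
        Submodule.Quotient.mk_neg, Submodule.Quotient.mk_zero,
        hφa, hφb, hφz, star_zB, star_zero, smul_eq_mul] at HL
      simp only [Fl_one, Fl_z, Fl_b, Fl_sb, Gl_one, Gl_z, Gl_b, Gl_sb, Hl_one, Hl_z, Hl_b, Hl_sb] at HL
      linear_combination (2/3 : ℂ) * HL
    have habs2 : ‖q‖ ^ 2 = 1 := by
      have h2 : ((Complex.normSq q : ℝ) : ℂ) = 1 := by rw [← Complex.mul_conj, key]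
      have h3 : (Complex.normSq q : ℝ) = 1 := by exact_mod_cast h2
      rw [← Complex.sq_norm] at h3
      exact h3
    have hnn := norm_nonneg q
    nlinarith [habs2, hnn]
  · intro habs
    have hq1 : q * (starRingEnd ℂ) q = 1 := by
      rw [Complex.mul_conj]
      norm_cast
      rw [Complex.normSq_eq_norm_sq, habs]; norm_num
    have hcinv : (starRingEnd ℂ) q = q⁻¹ :=
      ((inv_eq_of_mul_eq_one_right hq1).symm)
    have h1 : (Submodule.Quotient.mk (1 : A) : A ⧸ Submodule.span ℂ ({1} : Set A)) = 0 := by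
      rw [Submodule.Quotient.mk_eq_zero]
      exact Submodule.mem_span_singleton_self 1
    rw [hcinv]
    simp (config := { decide := true }) only [Submodule.mkQ_apply, Fin.sum_univ_four,
      Matrix.sub_apply, Matrix.smul_apply, Matrix.one_apply,
      Matrix.cons_val', Matrix.cons_val_zero, Matrix.cons_val_one, Matrix.head_cons,
      Matrix.empty_val', Matrix.cons_val_fin_one, Matrix.head_fin_const,
      Matrix.cons_val_two, Matrix.cons_val_three, Matrix.tail_cons, Matrix.of_apply,
      if_true, if_false]
    simp only [Submodule.mkQ_apply, Submodule.Quotient.mk_add, Submodule.Quotient.mk_sub,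
      Submodule.Quotient.mk_smul, Submodule.Quotient.mk_neg, Submodule.Quotient.mk_zero,
      h1, smul_add, smul_sub, smul_neg,
      add_zero, zero_add, sub_zero, zero_sub, neg_zero, smul_zero,
      TensorProduct.tmul_add, TensorProduct.add_tmul, TensorProduct.tmul_sub,
      TensorProduct.sub_tmul, TensorProduct.tmul_neg, TensorProduct.neg_tmul,
      TensorProduct.tmul_smul, ← TensorProduct.smul_tmul', h1, TensorProduct.tmul_zero,
      TensorProduct.zero_tmul, smul_smul]
    match_scalars <;> (field_simp; try ring)
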